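/- arXiv:1004.0875 — 2 statements merged into one kernel-verified Lean document; each statement's English description precedes it below -/
import Mathlib

section
/- Let H be a Hopf *-algebra over a commutative *-ring k and A a unital *-algebra over k with a *-action ▷ of H. Then for any two momentum maps J and J' for ▷ which are in addition *-homomorphisms (J(g*) = J(g)* and J'(g*) = J'(g)* for all g), the unique unital algebra homomorphism 𝗓 : H → Z(A) with J' = J * 𝗓 is itself a *-homomorphism, i.e. 𝗓(g*) = 𝗓(g)* for all g ∈ H. -/
open scoped TensorProduct

noncomputable section

namespace EquivariantMorita

/-- The Sweedler-type map `h ↦ μ (f h₍₁₎) (g h₍₂₎)` (with implicit summation over the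
Sweedler decomposition `Δ h = h₍₁₎ ⊗ h₍₂₎` of the comultiplication). -/
def sw (k : Type*) {H M N P : Type*} [CommRing k]
    [AddCommGroup H] [Module k H] [Coalgebra k H]
    [AddCommGroup M] [Module k M] [AddCommGroup N] [Module k N]
    [AddCommGroup P] [Module k P]
    (μ : M →ₗ[k] N →ₗ[k] P) (f : H →ₗ[k] M) (g : H →ₗ[k] N) : H →ₗ[k] P :=
  TensorProduct.lift μ ∘ₗ TensorProduct.map f g ∘ₗ (Coalgebra.comul : H →ₗ[k] H ⊗[k] H)

/-- The convolution-type map `h ↦ f (h₍₁₎) * g (h₍₂₎)`. -/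
def swMul (k : Type*) {H A : Type*} [CommRing k]
    [AddCommGroup H] [Module k H] [Coalgebra k H] [Ring A] [Algebra k A]
    (f g : H →ₗ[k] A) : H →ₗ[k] A :=
  sw k (LinearMap.mul k A) f g

section ModuleAlgebra

variable (k : Type*) [CommRing k] {H : Type*} [Ring H] [HopfAlgebra k H]
variable {A : Type*} [Ring A] [Algebra k A]

/-- `act : H × A → A` (given as a `k`-bilinear map) makes `A` a left `H`-module algebra:
`(gh) ▷ a = g ▷ (h ▷ a)`, `1 ▷ a = a`, `h ▷ (ab) = (h₍₁₎ ▷ a)(h₍₂₎ ▷ b)` and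
`h ▷ 1 = ε(h) 1`. -/
structure IsModuleAlgebraAction (act : H →ₗ[k] A →ₗ[k] A) : Prop where
  mul_act : ∀ (g h : H) (a : A), act (g * h) a = act g (act h a)
  one_act : ∀ a : A, act 1 a = a
  act_mul : ∀ (h : H) (a b : A), act h (a * b) = swMul k (act.flip a) (act.flip b) h
  act_one : ∀ h : H, act h 1 = Coalgebra.counit (R := k) h • (1 : A)

/-- Membership in `Gl(H,A)`: (i) `𝖺(1) = 1`, (ii) `𝖺(gh) = 𝖺(g₍₁₎)(g₍₂₎ ▷ 𝖺(h))`,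
(iii) `(h₍₁₎ ▷ b) 𝖺(h₍₂₎) = 𝖺(h₍₁₎)(h₍₂₎ ▷ b)`. -/
structure MemGl (act : H →ₗ[k] A →ₗ[k] A) (a : H →ₗ[k] A) : Prop where
  map_one' : a 1 = 1
  map_mul' : ∀ g h : H, a (g * h) = swMul k a (act.flip (a h)) g
  comm' : ∀ (h : H) (b : A), swMul k (act.flip b) a h = swMul k a (act.flip b) h

/-- `J` is a momentum map for the action `act`: it is a unital algebra homomorphism
`H → A` with `h ▷ a = J(h₍₁₎) a J(S(h₍₂₎))`. -/
structure IsMomentumMap (act : H →ₗ[k] A →ₗ[k] A) (J : H →ₗ[k] A) : Prop where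
  map_one' : J 1 = 1
  map_mul' : ∀ g h : H, J (g * h) = J g * J h
  inner' : ∀ (h : H) (a : A),
    act h a = swMul k J (LinearMap.mul k A a ∘ₗ (J ∘ₗ HopfAlgebra.antipode (R := k))) h

end ModuleAlgebra

end EquivariantMorita

namespace EquivariantMorita

section Aux

open Coalgebra TensorProduct

variable {k : Type*} [CommRing k] {H : Type*} [Ring H] [HopfAlgebra k H]
variable {A : Type*} [Ring A] [Algebra k A]

lemma swMul_repr (f g : H →ₗ[k] A) {h : H} {ι : Type*} (ρ : Coalgebra.Repr k h ι) :
    swMul k f g h = ∑ i ∈ ρ.index, f (ρ.left i) * g (ρ.right i) := by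
  simp only [swMul, sw, LinearMap.comp_apply, ← ρ.eq, map_sum, TensorProduct.map_tmul,
    TensorProduct.lift.tmul, LinearMap.mul_apply']

lemma counit_smul_sum (z : H →ₗ[k] A) {h : H} {ι : Type*} (ρ : Coalgebra.Repr k h ι) :
    ∑ i ∈ ρ.index, Coalgebra.counit (R := k) (ρ.left i) • z (ρ.right i) = z h := by
  have h1 := Coalgebra.sum_counit_tmul_eq (R := k) ρ
  have h2 := congrArg ((TensorProduct.lid k A).toLinearMap ∘ₗ LinearMap.lTensor k z) h1
  simp only [map_sum, LinearMap.coe_comp, Function.comp_apply, LinearMap.lTensor_tmul,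
    LinearEquiv.coe_coe, TensorProduct.lid_tmul, one_smul] at h2
  exact h2

lemma gen_sum (G : H ⊗[k] H →ₗ[k] A) (z : H →ₗ[k] A)
    {h : H} {ι κ Λ : Type*} (ρ : Coalgebra.Repr k h ι)
    (ρ₁ : ∀ i : ι, Coalgebra.Repr k (ρ.left i) κ)
    (ρ₂ : ∀ i : ι, Coalgebra.Repr k (ρ.right i) Λ)
    (hG : ∀ i : ι, ∑ j ∈ (ρ₁ i).index, G ((ρ₁ i).left j ⊗ₜ[k] (ρ₁ i).right j)
      = Coalgebra.counit (R := k) (ρ.left i) • (1 : A)) :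
    ∑ i ∈ ρ.index, ∑ j ∈ (ρ₂ i).index,
      G (ρ.left i ⊗ₜ[k] (ρ₂ i).left j) * z ((ρ₂ i).right j) = z h := by
  classical
  have coas := Coalgebra.sum_tmul_tmul_eq ρ ρ₁ ρ₂
  set Φ : H ⊗[k] (H ⊗[k] H) →ₗ[k] A :=
    (LinearMap.mul' k A) ∘ₗ (TensorProduct.map G z) ∘ₗ
      (TensorProduct.assoc k H H H).symm.toLinearMap with hΦdef
  have hΦ : ∀ x y w : H, Φ (x ⊗ₜ[k] (y ⊗ₜ[k] w)) = G (x ⊗ₜ[k] y) * z w := by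
    intro x y w
    simp [hΦdef]
  have h2 := congrArg Φ coas
  simp only [map_sum, hΦ] at h2
  rw [← h2]
  have h3 : ∀ i : ι, ∑ j ∈ (ρ₁ i).index,
      G ((ρ₁ i).left j ⊗ₜ[k] (ρ₁ i).right j) * z (ρ.right i)
      = Coalgebra.counit (R := k) (ρ.left i) • z (ρ.right i) := by
    intro i
    rw [← Finset.sum_mul, hG i, smul_mul_assoc, one_mul]
  calc ∑ i ∈ ρ.index, ∑ j ∈ (ρ₁ i).index,
        G ((ρ₁ i).left j ⊗ₜ[k] (ρ₁ i).right j) * z (ρ.right i)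
      = ∑ i ∈ ρ.index, Coalgebra.counit (R := k) (ρ.left i) • z (ρ.right i) :=
        Finset.sum_congr rfl fun i _ => h3 i
    _ = z h := counit_smul_sum z ρ

lemma z_eq_sum (J J' z : H →ₗ[k] A)
    (hJone : J 1 = 1) (hJmul : ∀ g h : H, J (g * h) = J g * J h)
    (hzJ : ∀ g : H, J' g = swMul k J z g)
    {g : H} {ι : Type*} (ρ : Coalgebra.Repr k g ι) :
    ∑ i ∈ ρ.index, J (HopfAlgebra.antipode (R := k) (ρ.left i)) * J' (ρ.right i) = z g := by
  classical
  set G : H ⊗[k] H →ₗ[k] A :=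
    J ∘ₗ LinearMap.mul' k H ∘ₗ
      TensorProduct.map (HopfAlgebra.antipode (R := k)) LinearMap.id with hGdef
  have hGt : ∀ x y : H, G (x ⊗ₜ[k] y) = J (HopfAlgebra.antipode (R := k) x * y) := by
    intro x y; simp [hGdef]
  set ρ₁ : ∀ i : ι, Coalgebra.Repr k (ρ.left i) (H × H) :=
    fun i => Coalgebra.Repr.arbitrary k (ρ.left i) with hρ₁
  set ρ₂ : ∀ i : ι, Coalgebra.Repr k (ρ.right i) (H × H) :=
    fun i => Coalgebra.Repr.arbitrary k (ρ.right i) with hρ₂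
  have hG : ∀ i : ι, ∑ j ∈ (ρ₁ i).index, G ((ρ₁ i).left j ⊗ₜ[k] (ρ₁ i).right j)
      = Coalgebra.counit (R := k) (ρ.left i) • (1 : A) := by
    intro i
    simp only [hGt]
    rw [← map_sum, HopfAlgebra.sum_antipode_mul_eq_smul (ρ₁ i), map_smul, hJone]
  have key := gen_sum G z ρ ρ₁ ρ₂ hG
  rw [← key]
  refine Finset.sum_congr rfl fun i _ => ?_
  rw [hzJ, swMul_repr J z (ρ₂ i), Finset.mul_sum]
  refine Finset.sum_congr rfl fun j _ => ?_
  rw [hGt, hJmul]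
  exact (mul_assoc _ _ _).symm

section Star

set_option linter.unusedSectionVars false

variable [StarRing k] [StarRing H] [StarModule k H]

/-- The "unantipode" `x ↦ star (S (star x))`, which is `k`-linear. -/
def starAntipode (k : Type*) {H : Type*} [CommRing k] [Ring H] [HopfAlgebra k H]
    [StarRing k] [StarRing H] [StarModule k H] : H →ₗ[k] H where
  toFun x := star (HopfAlgebra.antipode (R := k) (star x))
  map_add' x y := by simp [star_add, map_add]
  map_smul' c x := by simp [star_smul, map_smul]

lemma starAntipode_apply (x : H) :
    starAntipode k x = star (HopfAlgebra.antipode (R := k) (star x)) := rfl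

lemma comul_star_repr
    (hcomul_star : ∀ (g : H) (n : ℕ) (u v : Fin n → H),
      Coalgebra.comul (R := k) g = ∑ i, u i ⊗ₜ[k] v i →
      Coalgebra.comul (R := k) (star g) = ∑ i, star (u i) ⊗ₜ[k] star (v i))
    (a : H) {ι : Type*} (ρ : Coalgebra.Repr k a ι) :
    Coalgebra.comul (R := k) (star a) =
      ∑ i ∈ ρ.index, star (ρ.left i) ⊗ₜ[k] star (ρ.right i) := by
  classical
  let e := ρ.index.equivFin
  have key : ∀ (f : ι → H ⊗[k] H),
      ∑ i ∈ ρ.index, f i = ∑ j : Fin ρ.index.card, f (e.symm j) := by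
    intro f
    rw [← Finset.sum_coe_sort ρ.index f]
    exact (Equiv.sum_comp e.symm (fun i : ρ.index => f i)).symm
  have h1 : Coalgebra.comul (R := k) a
      = ∑ j : Fin ρ.index.card, ρ.left (e.symm j) ⊗ₜ[k] ρ.right (e.symm j) := by
    rw [← ρ.eq]; exact key _
  have h2 := hcomul_star a ρ.index.card
    (fun j => ρ.left (e.symm j)) (fun j => ρ.right (e.symm j)) h1
  rw [h2, key (fun i => star (ρ.left i) ⊗ₜ[k] star (ρ.right i))]

lemma sum_mul_starAntipode
    (hcounit_star : ∀ g : H,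
      Coalgebra.counit (R := k) (star g) = star (Coalgebra.counit (R := k) g))
    (hcomul_star : ∀ (g : H) (n : ℕ) (u v : Fin n → H),
      Coalgebra.comul (R := k) g = ∑ i, u i ⊗ₜ[k] v i →
      Coalgebra.comul (R := k) (star g) = ∑ i, star (u i) ⊗ₜ[k] star (v i))
    (a : H) {ι : Type*} (ρ : Coalgebra.Repr k a ι) :
    ∑ j ∈ ρ.index, ρ.right j * starAntipode k (ρ.left j)
      = Coalgebra.counit (R := k) a • (1 : H) := by
  classical
  have hsr := comul_star_repr hcomul_star a ρ
  have h2 := HopfAlgebra.sum_antipode_mul_eq_smul (R := k)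
    (Coalgebra.Repr.mk (ι := ι) ρ.index (fun i => star (ρ.left i))
      (fun i => star (ρ.right i)) hsr.symm)
  have h3 := congrArg star h2
  simpa [star_sum, star_mul, star_smul, star_star, hcounit_star,
    starAntipode_apply] using h3

lemma z_star_eq_sum (J J' z : H →ₗ[k] A)
    (hJone : J 1 = 1) (hJmul : ∀ g h : H, J (g * h) = J g * J h)
    (hzc : ∀ (g : H) (b : A), z g * b = b * z g)
    (hzJ : ∀ g : H, J' g = swMul k J z g)
    (hcounit_star : ∀ g : H,
      Coalgebra.counit (R := k) (star g) = star (Coalgebra.counit (R := k) g))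
    (hcomul_star : ∀ (g : H) (n : ℕ) (u v : Fin n → H),
      Coalgebra.comul (R := k) g = ∑ i, u i ⊗ₜ[k] v i →
      Coalgebra.comul (R := k) (star g) = ∑ i, star (u i) ⊗ₜ[k] star (v i))
    {h : H} {ι : Type*} (ρ : Coalgebra.Repr k h ι) :
    ∑ i ∈ ρ.index, J' (ρ.right i) * J (starAntipode k (ρ.left i)) = z h := by
  classical
  set G : H ⊗[k] H →ₗ[k] A :=
    J ∘ₗ LinearMap.mul' k H ∘ₗ TensorProduct.map LinearMap.id (starAntipode k) ∘ₗ
      (TensorProduct.comm k H H).toLinearMap with hGdef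
  have hGt : ∀ x y : H, G (x ⊗ₜ[k] y) = J (y * starAntipode k x) := by
    intro x y; simp [hGdef]
  set ρ₁ : ∀ i : ι, Coalgebra.Repr k (ρ.left i) (H × H) :=
    fun i => Coalgebra.Repr.arbitrary k (ρ.left i) with hρ₁
  set ρ₂ : ∀ i : ι, Coalgebra.Repr k (ρ.right i) (H × H) :=
    fun i => Coalgebra.Repr.arbitrary k (ρ.right i) with hρ₂
  have hG : ∀ i : ι, ∑ j ∈ (ρ₁ i).index, G ((ρ₁ i).left j ⊗ₜ[k] (ρ₁ i).right j)
      = Coalgebra.counit (R := k) (ρ.left i) • (1 : A) := by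
    intro i
    simp only [hGt]
    rw [← map_sum, sum_mul_starAntipode hcounit_star hcomul_star (ρ.left i) (ρ₁ i),
      map_smul, hJone]
  have key := gen_sum G z ρ ρ₁ ρ₂ hG
  rw [← key]
  refine Finset.sum_congr rfl fun i _ => ?_
  rw [hzJ, swMul_repr J z (ρ₂ i), Finset.sum_mul]
  refine Finset.sum_congr rfl fun j _ => ?_
  rw [hGt, hJmul]
  rw [mul_assoc, hzc ((ρ₂ i).right j) (J (starAntipode k (ρ.left i))), ← mul_assoc]

end Star

end Aux

end EquivariantMorita


namespace EquivariantMorita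

/-- In the `*`-setting, for two momentum maps `J, J'` of the same
`*`-action which are `*`-homomorphisms, the unique unital algebra homomorphism
`𝗓 : H → Z(A)` with `J' = J * 𝗓` is itself a `*`-homomorphism. -/
theorem central_twist_is_star_hom
    (k : Type*) [CommRing k] [StarRing k]
    {H : Type*} [Ring H] [HopfAlgebra k H] [StarRing H] [StarModule k H]
    {A : Type*} [Ring A] [Algebra k A] [StarRing A] [StarModule k A]
    (hcounit_star : ∀ g : H,
      Coalgebra.counit (R := k) (star g) = star (Coalgebra.counit (R := k) g))
    (hcomul_star : ∀ (g : H) (n : ℕ) (u v : Fin n → H),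
      Coalgebra.comul (R := k) g = ∑ i, u i ⊗ₜ[k] v i →
      Coalgebra.comul (R := k) (star g) = ∑ i, star (u i) ⊗ₜ[k] star (v i))
    (act : H →ₗ[k] A →ₗ[k] A) (hact : IsModuleAlgebraAction k act)
    (hstar_act : ∀ (h : H) (a : A),
      star (act h a) = act (star (HopfAlgebra.antipode (R := k) h)) (star a))
    (J J' : H →ₗ[k] A) (hJ : IsMomentumMap k act J) (hJ' : IsMomentumMap k act J')
    (hJstar : ∀ g : H, J (star g) = star (J g))
    (hJ'star : ∀ g : H, J' (star g) = star (J' g)) :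
    ∀ z : H →ₗ[k] A,
      (∀ (g : H) (b : A), z g * b = b * z g) → z 1 = 1 →
      (∀ g h : H, z (g * h) = z g * z h) →
      (∀ g : H, J' g = swMul k J z g) →
      ∀ g : H, z (star g) = star (z g) := by
  intro z hzc hz1 hzm hzJ g
  classical
  set ρ := Coalgebra.Repr.arbitrary k g with hρ
  have hsr := comul_star_repr hcomul_star g ρ
  have e1 := z_eq_sum J J' z hJ.map_one' hJ.map_mul' hzJ ρ
  have e2 := z_star_eq_sum J J' z hJ.map_one' hJ.map_mul' hzc hzJ hcounit_star hcomul_star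
    (Coalgebra.Repr.mk (ι := H × H) ρ.index (fun i => star (ρ.left i))
      (fun i => star (ρ.right i)) hsr.symm)
  rw [← e1, ← e2, star_sum]
  refine Finset.sum_congr rfl fun i _ => ?_
  rw [star_mul, ← hJstar, ← hJ'star]
  congr 1
  rw [starAntipode_apply, star_star]

end EquivariantMorita
end
end

section
/- Let H be a Hopf *-algebra over a commutative *-ring k, let A and B be unital *-algebras over k with *-actions ▷_A and ▷_B of H admitting momentum maps J^A and J^B which are *-homomorphisms, and let E be a (B,A)-bimodule carrying an A-valued inner product ⟨·,·⟩. Then the lifted H-action h ▷ x := J^B(h₁) · x · J^A(S(h₂)) on E is compatible with the inner product: h ▷_A ⟨x,y⟩ = ⟨S(h₁)* ▷ x, h₂ ▷ y⟩ for all h ∈ H and x,y ∈ E. -/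
open scoped TensorProduct

noncomputable section

namespace EquivariantMorita

section BimodulePart

variable (k : Type*) [CommRing k]
variable {H : Type*} [Ring H] [HopfAlgebra k H]
variable {A : Type*} [Ring A] [Algebra k A]
variable {B : Type*} [Ring B] [Algebra k B]
variable {E : Type*} [AddCommGroup E] [Module k E]

/-- `E` is a unital `(B,A)`-bimodule via the `k`-bilinear left multiplication `lB`
(`lB b x = b · x`) and right multiplication `rA` (`rA a x = x · a`). -/
structure IsBimodule (lB : B →ₗ[k] E →ₗ[k] E) (rA : A →ₗ[k] E →ₗ[k] E) : Prop where
  one_lsmul : ∀ x : E, lB 1 x = x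
  mul_lsmul : ∀ (b b' : B) (x : E), lB (b * b') x = lB b (lB b' x)
  one_rsmul : ∀ x : E, rA 1 x = x
  mul_rsmul : ∀ (a a' : A) (x : E), rA (a * a') x = rA a' (rA a x)
  lsmul_rsmul : ∀ (b : B) (a : A) (x : E), rA a (lB b x) = lB b (rA a x)

/-- `actE` makes the `(B,A)`-bimodule `E` (with multiplications `lB`, `rA`) an
`H`-equivariant bimodule: `(gh) ▷ x = g ▷ (h ▷ x)`, `1 ▷ x = x`,
`h ▷ (b·x) = (h₍₁₎ ▷ b)·(h₍₂₎ ▷ x)` and `h ▷ (x·a) = (h₍₁₎ ▷ x)·(h₍₂₎ ▷ a)`. -/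
structure IsEquivariantBimodule (actB : H →ₗ[k] B →ₗ[k] B) (actA : H →ₗ[k] A →ₗ[k] A)
    (lB : B →ₗ[k] E →ₗ[k] E) (rA : A →ₗ[k] E →ₗ[k] E)
    (actE : H →ₗ[k] E →ₗ[k] E) : Prop where
  mul_act : ∀ (g h : H) (x : E), actE (g * h) x = actE g (actE h x)
  one_act : ∀ x : E, actE 1 x = x
  act_lsmul : ∀ (h : H) (b : B) (x : E),
    actE h (lB b x) = sw k lB (actB.flip b) (actE.flip x) h
  act_rsmul : ∀ (h : H) (a : A) (x : E),
    actE h (rA a x) = sw k rA.flip (actE.flip x) (actA.flip a) h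

/-- The canonical lift `h ▷ x = J^B(h₍₁₎) · (x · J^A(S(h₍₂₎)))` of the `H`-action to a
`(B,A)`-bimodule along momentum maps, as a linear map in `h` for fixed `x`. -/
def momLift (JB : H →ₗ[k] B) (JA : H →ₗ[k] A)
    (lB : B →ₗ[k] E →ₗ[k] E) (rA : A →ₗ[k] E →ₗ[k] E) (x : E) : H →ₗ[k] E :=
  sw k lB JB (rA.flip x ∘ₗ (JA ∘ₗ HopfAlgebra.antipode (R := k)))

end BimodulePart

end EquivariantMorita

namespace EquivariantMorita


section AuxConv

open Coalgebra

variable {k : Type*} [CommRing k]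
variable {C : Type*} [AddCommGroup C] [Module k C] [Coalgebra k C]

theorem sw_apply_repr {M N P : Type*}
    [AddCommGroup M] [Module k M] [AddCommGroup N] [Module k N]
    [AddCommGroup P] [Module k P]
    (μ : M →ₗ[k] N →ₗ[k] P) (f : C →ₗ[k] M) (g : C →ₗ[k] N) {a : C} {ι : Type*}
    (r : Coalgebra.Repr k a ι) :
    sw k μ f g a = ∑ i ∈ r.index, μ (f (r.left i)) (g (r.right i)) := by
  rw [sw]
  simp only [LinearMap.comp_apply, ← r.eq, map_sum, TensorProduct.map_tmul,
    TensorProduct.lift.tmul]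

theorem swMul_apply_repr {A : Type*} [Ring A] [Algebra k A]
    (f g : C →ₗ[k] A) {a : C} {ι : Type*} (r : Coalgebra.Repr k a ι) :
    swMul k f g a = ∑ i ∈ r.index, f (r.left i) * g (r.right i) :=
  sw_apply_repr _ f g r

theorem repr_counit_smul_right {a : C} {ι : Type*} (r : Coalgebra.Repr k a ι) :
    ∑ i ∈ r.index, counit (R := k) (r.left i) • r.right i = a := by
  have h := Coalgebra.sum_counit_tmul_eq r
  calc ∑ i ∈ r.index, counit (R := k) (r.left i) • r.right i
      = ∑ i ∈ r.index,
          TensorProduct.lid k C (counit (R := k) (r.left i) ⊗ₜ[k] r.right i) := by simp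
    _ = TensorProduct.lid k C (1 ⊗ₜ[k] a) := by rw [← map_sum, h]
    _ = a := by simp

theorem repr_counit_smul_left {a : C} {ι : Type*} (r : Coalgebra.Repr k a ι) :
    ∑ i ∈ r.index, counit (R := k) (r.right i) • r.left i = a := by
  have h := Coalgebra.sum_tmul_counit_eq r
  calc ∑ i ∈ r.index, counit (R := k) (r.right i) • r.left i
      = ∑ i ∈ r.index,
          TensorProduct.rid k C (r.left i ⊗ₜ[k] counit (R := k) (r.right i)) := by simp
    _ = TensorProduct.rid k C (a ⊗ₜ[k] 1) := by rw [← map_sum, h]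
    _ = a := by simp

variable {A : Type*} [Ring A] [Algebra k A]

theorem swMul_unit_right (f : C →ₗ[k] A) :
    swMul k f ((Algebra.linearMap k A) ∘ₗ (counit : C →ₗ[k] k)) = f := by
  ext a
  obtain r := Coalgebra.Repr.arbitrary k a
  rw [swMul_apply_repr _ _ r]
  calc ∑ i ∈ r.index, f (r.left i) * (Algebra.linearMap k A ∘ₗ counit) (r.right i)
      = ∑ i ∈ r.index, counit (R := k) (r.right i) • f (r.left i) := by
        refine Finset.sum_congr rfl fun i _ => ?_
        simp [Algebra.smul_def, Algebra.commutes]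
    _ = f (∑ i ∈ r.index, counit (R := k) (r.right i) • r.left i) := by
        rw [map_sum]
        exact Finset.sum_congr rfl fun i _ => (map_smul f _ _).symm
    _ = f a := by rw [repr_counit_smul_left r]
  
theorem swMul_unit_left (f : C →ₗ[k] A) :
    swMul k ((Algebra.linearMap k A) ∘ₗ (counit : C →ₗ[k] k)) f = f := by
  ext a
  obtain r := Coalgebra.Repr.arbitrary k a
  rw [swMul_apply_repr _ _ r]
  calc ∑ i ∈ r.index, (Algebra.linearMap k A ∘ₗ counit) (r.left i) * f (r.right i)
      = ∑ i ∈ r.index, counit (R := k) (r.left i) • f (r.right i) := by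
        refine Finset.sum_congr rfl fun i _ => ?_
        simp [Algebra.smul_def]
    _ = f (∑ i ∈ r.index, counit (R := k) (r.left i) • r.right i) := by
        rw [map_sum]
        exact Finset.sum_congr rfl fun i _ => (map_smul f _ _).symm
    _ = f a := by rw [repr_counit_smul_right r]

end AuxConv

section AuxConv2

open Coalgebra

variable {k : Type*} [CommRing k]
variable {C : Type*} [AddCommGroup C] [Module k C] [Coalgebra k C]
variable {A : Type*} [Ring A] [Algebra k A]

theorem swMul_assoc (f g e : C →ₗ[k] A) :
    swMul k (swMul k f g) e = swMul k f (swMul k g e) := by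
  ext a
  obtain r := Coalgebra.Repr.arbitrary k a
  have a₁ : ∀ i, Coalgebra.Repr k (r.left i) (C × C) := fun i => Coalgebra.Repr.arbitrary k _
  have a₂ : ∀ i, Coalgebra.Repr k (r.right i) (C × C) := fun i => Coalgebra.Repr.arbitrary k _
  have key := Coalgebra.sum_map_tmul_tmul_eq (R := k) f g e a (repr := r) (a₁ := a₁) (a₂ := a₂)
  -- mul₃ : A ⊗ (A ⊗ A) → A, a ⊗ (b ⊗ c) ↦ a * (b * c)
  set mul₃ : A ⊗[k] (A ⊗[k] A) →ₗ[k] A :=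
    TensorProduct.lift (((LinearMap.llcomp k (A ⊗[k] A) A A).flip
      (TensorProduct.lift (LinearMap.mul k A))) ∘ₗ (LinearMap.mul k A)) with hmul₃
  have hm3 : ∀ x y z : A, mul₃ (x ⊗ₜ[k] (y ⊗ₜ[k] z)) = x * (y * z) := by
    intro x y z; simp [hmul₃]
  have key2 := congrArg mul₃ key
  simp only [map_sum, hm3] at key2
  rw [swMul_apply_repr _ _ r, swMul_apply_repr _ _ r]
  calc ∑ i ∈ r.index, swMul k f g (r.left i) * e (r.right i)
      = ∑ i ∈ r.index, ∑ j ∈ (a₁ i).index,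
          f ((a₁ i).left j) * ((g ((a₁ i).right j)) * e (r.right i)) := by
        refine Finset.sum_congr rfl fun i _ => ?_
        rw [swMul_apply_repr _ _ (a₁ i), Finset.sum_mul]
        exact Finset.sum_congr rfl fun j _ => mul_assoc _ _ _
    _ = ∑ i ∈ r.index, ∑ j ∈ (a₂ i).index,
          f (r.left i) * (g ((a₂ i).left j) * e ((a₂ i).right j)) := key2.symm
    _ = ∑ i ∈ r.index, f (r.left i) * swMul k g e (r.right i) := by
        refine Finset.sum_congr rfl fun i _ => ?_
        rw [swMul_apply_repr _ _ (a₂ i), Finset.mul_sum]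

theorem swMul_unique {f g e : C →ₗ[k] A}
    (h1 : swMul k f g = (Algebra.linearMap k A) ∘ₗ (counit : C →ₗ[k] k))
    (h2 : swMul k g e = (Algebra.linearMap k A) ∘ₗ (counit : C →ₗ[k] k)) :
    f = e := by
  have : swMul k f (swMul k g e) = swMul k (swMul k f g) e := (swMul_assoc f g e).symm
  rw [h1, h2, swMul_unit_right, swMul_unit_left] at this
  exact this

end AuxConv2

section AuxHopf

open Coalgebra HopfAlgebra

variable {k : Type*} [CommRing k]
variable {H : Type*} [Ring H] [HopfAlgebra k H]

theorem swMul_antipode_id :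
    swMul k (antipode (R := k) (A := H)) LinearMap.id
      = (Algebra.linearMap k H) ∘ₗ (counit : H →ₗ[k] k) := by
  ext a
  obtain r := Coalgebra.Repr.arbitrary k a
  rw [swMul_apply_repr _ _ r]
  simp only [LinearMap.id_coe, id_eq, LinearMap.comp_apply, Algebra.linearMap_apply]
  rw [HopfAlgebra.sum_antipode_mul_eq_algebraMap_counit r]

theorem swMul_id_antipode :
    swMul k LinearMap.id (antipode (R := k) (A := H))
      = (Algebra.linearMap k H) ∘ₗ (counit : H →ₗ[k] k) := by
  ext a
  obtain r := Coalgebra.Repr.arbitrary k a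
  rw [swMul_apply_repr _ _ r]
  simp only [LinearMap.id_coe, id_eq, LinearMap.comp_apply, Algebra.linearMap_apply]
  rw [HopfAlgebra.sum_mul_antipode_eq_algebraMap_counit r]

theorem antipode_one' : antipode (R := k) (A := H) 1 = 1 := by
  have h := HopfAlgebra.mul_antipode_rTensor_comul_apply (R := k) (A := H) (a := 1)
  have hc : Coalgebra.comul (R := k) (1 : H) = (1 : H) ⊗ₜ[k] 1 := by
    have h1 : Coalgebra.comul (R := k) (1 : H) = (1 : H ⊗[k] H) :=
      map_one (Bialgebra.comulAlgHom k H)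
    rw [h1, Algebra.TensorProduct.one_def]
  rw [hc] at h
  simpa using h

/-- product representation: `Δ(ab) = Δa Δb`. -/
def mulRepr {a b : H} {ι κ : Type*} (ra : Coalgebra.Repr k a ι) (rb : Coalgebra.Repr k b κ) :
    Coalgebra.Repr k (a * b) (ι × κ) where
  index := ra.index ×ˢ rb.index
  left := fun p => ra.left p.1 * rb.left p.2
  right := fun p => ra.right p.1 * rb.right p.2
  eq := by
    rw [Bialgebra.comul_mul, ← ra.eq, ← rb.eq, Finset.sum_mul_sum]
    rw [Finset.sum_product]
    refine Finset.sum_congr rfl fun i _ => Finset.sum_congr rfl fun j _ => ?_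
    simp [Algebra.TensorProduct.tmul_mul_tmul]

end AuxHopf


section AuxHopf2

open Coalgebra HopfAlgebra

variable {k : Type*} [CommRing k]
variable {H : Type*} [Ring H] [HopfAlgebra k H]

/-- Collapse lemma: `∑ ψ(S(g₁)g₂, g₃) = ψ(1, g)`. -/
theorem collapse3 {M : Type*} [AddCommGroup M] [Module k M]
    (ψ : H →ₗ[k] H →ₗ[k] M) {g : H} {ι : Type*} (r : Coalgebra.Repr k g ι)
    (s : (i : r.ι) → Coalgebra.Repr k (r.right i) (H × H)) :
    ∑ i ∈ r.index, ∑ p ∈ (s i).index,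
      ψ (antipode (R := k) (r.left i) * (s i).left p) ((s i).right p) = ψ 1 g := by
  classical
  have t : (i : r.ι) → Coalgebra.Repr k (r.left i) (H × H) := fun i => Coalgebra.Repr.arbitrary k _
  have C := Coalgebra.sum_tmul_tmul_eq r t s
  set ν : H ⊗[k] H →ₗ[k] H :=
    LinearMap.mul' k H ∘ₗ (antipode (R := k) (A := H)).rTensor H with hν
  set Θ : H ⊗[k] (H ⊗[k] H) →ₗ[k] M :=
    TensorProduct.lift ψ ∘ₗ ν.rTensor H ∘ₗ (TensorProduct.assoc k H H H).symm.toLinearMap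
    with hΘdef
  have hΘ : ∀ a b c : H, Θ (a ⊗ₜ[k] (b ⊗ₜ[k] c)) = ψ (antipode (R := k) a * b) c := by
    intro a b c
    simp [hΘdef, hν]
  have C2 := congrArg Θ C
  simp only [map_sum, hΘ] at C2
  rw [← C2]
  calc ∑ i ∈ r.index, ∑ j ∈ (t i).index,
        ψ (antipode (R := k) ((t i).left j) * (t i).right j) (r.right i)
      = ∑ i ∈ r.index, ψ (counit (R := k) (r.left i) • 1) (r.right i) := by
        refine Finset.sum_congr rfl fun i _ => ?_
        have : ∑ j ∈ (t i).index, ψ (antipode (R := k) ((t i).left j) * (t i).right j)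
            = ψ (∑ j ∈ (t i).index, antipode (R := k) ((t i).left j) * (t i).right j) :=
          (map_sum ψ _ _).symm
        rw [← LinearMap.sum_apply, this, HopfAlgebra.sum_antipode_mul_eq_smul (t i)]
    _ = ψ 1 g := by
        simp only [map_smul, LinearMap.smul_apply]
        have h2 : ∑ i ∈ r.index, counit (R := k) (r.left i) • (ψ 1) (r.right i)
            = (ψ 1) (∑ i ∈ r.index, counit (R := k) (r.left i) • r.right i) := by
          rw [map_sum]
          exact Finset.sum_congr rfl fun i _ => (map_smul (ψ 1) _ _).symm
        rw [h2, repr_counit_smul_right r]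

end AuxHopf2


section AuxHopf3

open Coalgebra HopfAlgebra

variable {k : Type*} [CommRing k]
variable {H : Type*} [Ring H] [HopfAlgebra k H]

theorem antipode_mul' (g h : H) :
    antipode (R := k) (g * h) = antipode (R := k) h * antipode (R := k) g := by
  classical
  set S' : H →ₗ[k] H := antipode (R := k) (A := H) with hS'
  obtain rg := Coalgebra.Repr.arbitrary k g
  obtain rh := Coalgebra.Repr.arbitrary k h
  have sg : (i : rg.ι) → Coalgebra.Repr k (rg.right i) (H × H) := fun i => Coalgebra.Repr.arbitrary k _
  have sh : (j : rh.ι) → Coalgebra.Repr k (rh.right j) (H × H) := fun j => Coalgebra.Repr.arbitrary k _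
  set ψ : H →ₗ[k] H →ₗ[k] H := LinearMap.mk₂ k
      (fun m c => ∑ j ∈ rh.index, ∑ q ∈ (sh j).index,
        S' (rh.left j) * m * ((sh j).left q * S' (c * (sh j).right q)))
      (by intros; simp [add_mul, mul_add, Finset.sum_add_distrib])
      (by intros; simp [mul_smul_comm, smul_mul_assoc, Finset.smul_sum])
      (by intros; simp [add_mul, map_add, mul_add, Finset.sum_add_distrib])
      (by intros; simp [smul_mul_assoc, map_smul, mul_smul_comm, Finset.smul_sum])
      with hψ
  set ψ₂ : H →ₗ[k] H →ₗ[k] H := LinearMap.mk₂ k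
      (fun m c => m * S' (g * c))
      (by intros; simp [add_mul])
      (by intros; simp [smul_mul_assoc])
      (by intros; simp [mul_add, map_add])
      (by intros; simp [mul_smul_comm, map_smul, smul_mul_assoc])
      with hψ₂
  have hSg : S' g = ∑ i ∈ rg.index, counit (R := k) (rg.right i) • S' (rg.left i) := by
    conv_lhs => rw [← repr_counit_smul_left rg]
    rw [map_sum]
    simp [map_smul]
  have hSh : S' h = ∑ j ∈ rh.index, counit (R := k) (rh.right j) • S' (rh.left j) := by
    conv_lhs => rw [← repr_counit_smul_left rh]
    rw [map_sum]
    simp [map_smul]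
  have step1 : S' h * S' g = ∑ i ∈ rg.index, ∑ p ∈ (sg i).index,
      ψ (S' (rg.left i) * (sg i).left p) ((sg i).right p) := by
    rw [hSg, hSh, Finset.sum_mul_sum]
    have hterm : ∀ j ∈ rh.index, ∀ i ∈ rg.index,
        (counit (R := k) (rh.right j) • S' (rh.left j)) *
          (counit (R := k) (rg.right i) • S' (rg.left i))
        = ∑ p ∈ (sg i).index, ∑ q ∈ (sh j).index,
            S' (rh.left j) * S' (rg.left i) *
              (((sg i).left p * (sh j).left q) * S' ((sg i).right p * (sh j).right q)) := by
      intro j _ i _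
      rw [smul_mul_smul]
      have hcu : counit (R := k) (rh.right j) * counit (R := k) (rg.right i)
          = counit (R := k) (rg.right i * rh.right j) := by
        rw [Bialgebra.counit_mul, mul_comm]
      rw [hcu]
      have : (counit (R := k) (rg.right i * rh.right j)) •
            (S' (rh.left j) * S' (rg.left i))
          = (S' (rh.left j) * S' (rg.left i)) *
            ((counit (R := k) (rg.right i * rh.right j)) • 1) := by
        rw [mul_smul_comm, mul_one]
      rw [this, ← HopfAlgebra.sum_mul_antipode_eq_smul (mulRepr (sg i) (sh j)),
        Finset.mul_sum]
      exact Finset.sum_product ((sg i).index) ((sh j).index)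
        (fun pq => S' (rh.left j) * S' (rg.left i) *
          (((sg i).left pq.1 * (sh j).left pq.2) *
            S' ((sg i).right pq.1 * (sh j).right pq.2)))
    rw [Finset.sum_congr rfl (fun j hj => Finset.sum_congr rfl (fun i hi => hterm j hj i hi))]
    rw [Finset.sum_comm]
    refine Finset.sum_congr rfl fun i _ => ?_
    rw [Finset.sum_comm]
    refine Finset.sum_congr rfl fun p _ => ?_
    simp only [hψ, LinearMap.mk₂_apply]
    refine Finset.sum_congr rfl fun j _ => Finset.sum_congr rfl fun q _ => ?_
    simp only [mul_assoc]
  have step2 : ψ 1 g = ∑ j ∈ rh.index, ∑ q ∈ (sh j).index,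
      ψ₂ (S' (rh.left j) * (sh j).left q) ((sh j).right q) := by
    simp only [hψ, hψ₂, LinearMap.mk₂_apply, mul_one]
    refine Finset.sum_congr rfl fun j _ => Finset.sum_congr rfl fun q _ => ?_
    simp only [mul_assoc]
  rw [hS'] at step1
  rw [step1, collapse3 ψ rg sg, step2, collapse3 ψ₂ rh sh]
  simp [hψ₂]

end AuxHopf3


section AuxHopf4

open Coalgebra HopfAlgebra TensorProduct

variable {k : Type*} [CommRing k]
variable {H : Type*} [Ring H] [HopfAlgebra k H]

/-- Four-fold middle collapse: `∑ ψ(g₁, S(g₂)g₃, g₄) = ∑ ψ(g₁, 1, g₂)`. -/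
theorem collapse4 {M : Type*} [AddCommGroup M] [Module k M]
    (ψ : H →ₗ[k] H →ₗ[k] H →ₗ[k] M) {g : H} {ι : Type*} (r : Coalgebra.Repr k g ι)
    (ru : (i : r.ι) → Coalgebra.Repr k (r.left i) (H × H))
    (rw' : (i : r.ι) → Coalgebra.Repr k (r.right i) (H × H)) :
    ∑ i ∈ r.index, ∑ p ∈ (ru i).index, ∑ q ∈ (rw' i).index,
      ψ ((ru i).left p) (antipode (R := k) ((ru i).right p) * (rw' i).left q)
        ((rw' i).right q)
    = ∑ i ∈ r.index, ψ (r.left i) 1 (r.right i) := by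
  classical
  have C := Coalgebra.sum_tmul_tmul_eq r ru rw'
  set W : H ⊗[k] (H ⊗[k] H) →ₗ[k] H ⊗[k] (H ⊗[k] (H ⊗[k] H)) :=
    LinearMap.lTensor H (LinearMap.lTensor H (Coalgebra.comul (R := k))) with hW
  have D := congrArg W C
  set ν : H ⊗[k] H →ₗ[k] H :=
    LinearMap.mul' k H ∘ₗ (antipode (R := k) (A := H)).rTensor H with hν
  set μ' : H ⊗[k] (H ⊗[k] H) →ₗ[k] H ⊗[k] H :=
    ν.rTensor H ∘ₗ (TensorProduct.assoc k H H H).symm.toLinearMap with hμ'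
  set Θ : H ⊗[k] (H ⊗[k] (H ⊗[k] H)) →ₗ[k] M :=
    TensorProduct.lift ((TensorProduct.uncurry (σ₁₂ := RingHom.id k) (M := H) (N := H) (P₂ := M)) ∘ₗ ψ) ∘ₗ LinearMap.lTensor H μ'
    with hΘdef
  have hΘ : ∀ a b c d : H, Θ (a ⊗ₜ[k] (b ⊗ₜ[k] (c ⊗ₜ[k] d)))
      = ψ a (antipode (R := k) b * c) d := by
    intro a b c d
    simp [hΘdef, hμ', hν]
  have E := congrArg Θ D
  -- evaluate the left side
  have hL : Θ (W (∑ i ∈ r.index, ∑ j ∈ (ru i).index,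
        (ru i).left j ⊗ₜ[k] ((ru i).right j ⊗ₜ[k] r.right i)))
      = ∑ i ∈ r.index, ∑ p ∈ (ru i).index, ∑ q ∈ (rw' i).index,
          ψ ((ru i).left p) (antipode (R := k) ((ru i).right p) * (rw' i).left q)
            ((rw' i).right q) := by
    rw [map_sum W _ r.index, map_sum Θ _ r.index]
    refine Finset.sum_congr rfl fun i _ => ?_
    rw [map_sum W _ (ru i).index, map_sum Θ _ (ru i).index]
    refine Finset.sum_congr rfl fun p _ => ?_
    have w1 : W ((ru i).left p ⊗ₜ[k] ((ru i).right p ⊗ₜ[k] r.right i))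
        = ∑ q ∈ (rw' i).index, (ru i).left p ⊗ₜ[k]
            ((ru i).right p ⊗ₜ[k] ((rw' i).left q ⊗ₜ[k] (rw' i).right q)) := by
      rw [hW]
      simp only [LinearMap.lTensor_tmul]
      rw [← (rw' i).eq, TensorProduct.tmul_sum, TensorProduct.tmul_sum]
    rw [w1, map_sum Θ _ (rw' i).index]
    exact Finset.sum_congr rfl fun q _ => hΘ _ _ _ _
  -- evaluate the right side
  have hR : Θ (W (∑ i ∈ r.index, ∑ j ∈ (rw' i).index,
        r.left i ⊗ₜ[k] ((rw' i).left j ⊗ₜ[k] (rw' i).right j)))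
      = ∑ i ∈ r.index, ψ (r.left i) 1 (r.right i) := by
    rw [map_sum W _ r.index, map_sum Θ _ r.index]
    refine Finset.sum_congr rfl fun i _ => ?_
    have sv : (q : (rw' i).ι) → Coalgebra.Repr k ((rw' i).left q) (H × H) :=
      fun q => Coalgebra.Repr.arbitrary k _
    have e0 : W (∑ j ∈ (rw' i).index,
        r.left i ⊗ₜ[k] ((rw' i).left j ⊗ₜ[k] (rw' i).right j))
        = r.left i ⊗ₜ[k]
            (LinearMap.lTensor H (Coalgebra.comul (R := k)) (Coalgebra.comul (r.right i))) := by
      rw [← TensorProduct.tmul_sum, (rw' i).eq, hW]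
      simp only [LinearMap.lTensor_tmul]
    have e1 : LinearMap.lTensor H (Coalgebra.comul (R := k)) (Coalgebra.comul (r.right i))
        = TensorProduct.assoc k H H H
            ((Coalgebra.comul (R := k)).rTensor H (Coalgebra.comul (r.right i))) :=
      (Coalgebra.coassoc_apply (r.right i)).symm
    have e2 : (Coalgebra.comul (R := k)).rTensor H (Coalgebra.comul (r.right i))
        = ∑ q ∈ (rw' i).index, ∑ s ∈ (sv q).index,
            ((sv q).left s ⊗ₜ[k] (sv q).right s) ⊗ₜ[k] (rw' i).right q := by
      conv_lhs => rw [← (rw' i).eq]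
      rw [map_sum]
      refine Finset.sum_congr rfl fun q _ => ?_
      rw [LinearMap.rTensor_tmul, ← (sv q).eq, TensorProduct.sum_tmul]
    rw [e0, e1, e2]
    rw [map_sum (TensorProduct.assoc k H H H) _ (rw' i).index, TensorProduct.tmul_sum,
      map_sum Θ _ (rw' i).index]
    have e3 : ∀ q ∈ (rw' i).index,
        Θ (r.left i ⊗ₜ[k] (TensorProduct.assoc k H H H
            (∑ s ∈ (sv q).index, ((sv q).left s ⊗ₜ[k] (sv q).right s) ⊗ₜ[k] (rw' i).right q)))
        = counit (R := k) ((rw' i).left q) • ψ (r.left i) 1 ((rw' i).right q) := by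
      intro q _
      rw [map_sum (TensorProduct.assoc k H H H) _ (sv q).index, TensorProduct.tmul_sum,
        map_sum Θ _ (sv q).index]
      simp only [TensorProduct.assoc_tmul]
      calc ∑ s ∈ (sv q).index,
            Θ (r.left i ⊗ₜ[k] ((sv q).left s ⊗ₜ[k] ((sv q).right s ⊗ₜ[k] (rw' i).right q)))
          = ∑ s ∈ (sv q).index, ψ (r.left i)
              (antipode (R := k) ((sv q).left s) * (sv q).right s) ((rw' i).right q) :=
            Finset.sum_congr rfl fun s _ => hΘ _ _ _ _
        _ = ψ (r.left i)
              (∑ s ∈ (sv q).index, antipode (R := k) ((sv q).left s) * (sv q).right s)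
              ((rw' i).right q) := by
            rw [map_sum (ψ (r.left i)) _ (sv q).index, LinearMap.sum_apply]
        _ = counit (R := k) ((rw' i).left q) • ψ (r.left i) 1 ((rw' i).right q) := by
            rw [HopfAlgebra.sum_antipode_mul_eq_smul (sv q)]
            simp [map_smul]
    rw [Finset.sum_congr rfl e3]
    calc ∑ q ∈ (rw' i).index, counit (R := k) ((rw' i).left q) • ψ (r.left i) 1 ((rw' i).right q)
        = ψ (r.left i) 1 (∑ q ∈ (rw' i).index, counit (R := k) ((rw' i).left q) • (rw' i).right q) := by
          rw [map_sum]
          exact Finset.sum_congr rfl fun q _ => (map_smul (ψ (r.left i) 1) _ _).symm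
      _ = ψ (r.left i) 1 (r.right i) := by rw [repr_counit_smul_right (rw' i)]
  rw [hL, hR] at E
  exact E

end AuxHopf4


section AuxHopf5

open Coalgebra HopfAlgebra TensorProduct

variable {k : Type*} [CommRing k]
variable {H : Type*} [Ring H] [HopfAlgebra k H]

theorem comul_comp_antipode :
    (Coalgebra.comul (R := k) (A := H)) ∘ₗ antipode (R := k)
      = (TensorProduct.comm k H H).toLinearMap
          ∘ₗ TensorProduct.map (antipode (R := k)) (antipode (R := k))
          ∘ₗ Coalgebra.comul := by
  classical
  set S' : H →ₗ[k] H := antipode (R := k) (A := H) with hS'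
  set f : H →ₗ[k] H ⊗[k] H := (TensorProduct.comm k H H).toLinearMap
      ∘ₗ TensorProduct.map S' S' ∘ₗ Coalgebra.comul with hf
  set Δ : H →ₗ[k] H ⊗[k] H := Coalgebra.comul (R := k) with hΔ
  have h1 : swMul k f Δ = (Algebra.linearMap k (H ⊗[k] H)) ∘ₗ (counit : H →ₗ[k] k) := by
    ext a
    obtain r := Coalgebra.Repr.arbitrary k a
    have ru : (i : r.ι) → Coalgebra.Repr k (r.left i) (H × H) := fun i => Coalgebra.Repr.arbitrary k _
    have rv : (i : r.ι) → Coalgebra.Repr k (r.right i) (H × H) := fun i => Coalgebra.Repr.arbitrary k _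
    set ψτ : H →ₗ[k] H →ₗ[k] H →ₗ[k] (H ⊗[k] H) := LinearMap.mk₂ k
        (fun a m => (TensorProduct.mk k H H m) ∘ₗ ((LinearMap.mul k H) (S' a)))
        (by intros; ext c; simp [map_add, add_mul, TensorProduct.tmul_add])
        (by intros; ext c; simp [map_smul, smul_mul_assoc, TensorProduct.tmul_smul])
        (by intros; ext c; simp [TensorProduct.add_tmul])
        (by intros; ext c; simp [TensorProduct.smul_tmul'])
        with hψτ
    rw [swMul_apply_repr _ _ r]
    have hterm : ∀ i ∈ r.index, f (r.left i) * Δ (r.right i)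
        = ∑ p ∈ (ru i).index, ∑ q ∈ (rv i).index,
            ψτ ((ru i).left p) (S' ((ru i).right p) * (rv i).left q) ((rv i).right q) := by
      intro i _
      have hfl : f (r.left i) = ∑ p ∈ (ru i).index,
          S' ((ru i).right p) ⊗ₜ[k] S' ((ru i).left p) := by
        rw [hf]
        simp only [LinearMap.comp_apply]
        rw [← (ru i).eq, map_sum, map_sum]
        simp [TensorProduct.map_tmul]
      have hdr : Δ (r.right i) = ∑ q ∈ (rv i).index,
          (rv i).left q ⊗ₜ[k] (rv i).right q := by
        rw [hΔ, ← (rv i).eq]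
      rw [hfl, hdr, Finset.sum_mul_sum]
      refine Finset.sum_congr rfl fun p _ => Finset.sum_congr rfl fun q _ => ?_
      rw [Algebra.TensorProduct.tmul_mul_tmul]
      simp [hψτ]
    rw [Finset.sum_congr rfl hterm, collapse4 ψτ r ru rv]
    have : ∀ i ∈ r.index, ψτ (r.left i) 1 (r.right i)
        = (1 : H) ⊗ₜ[k] (S' (r.left i) * r.right i) := by
      intro i _; simp [hψτ]
    rw [Finset.sum_congr rfl this, ← TensorProduct.tmul_sum,
      HopfAlgebra.sum_antipode_mul_eq_smul r]
    simp only [LinearMap.comp_apply, Algebra.linearMap_apply]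
    rw [Algebra.algebraMap_eq_smul_one, TensorProduct.tmul_smul]
    rw [Algebra.TensorProduct.one_def]
  have h2 : swMul k Δ (Δ ∘ₗ S') = (Algebra.linearMap k (H ⊗[k] H)) ∘ₗ (counit : H →ₗ[k] k) := by
    ext a
    obtain r := Coalgebra.Repr.arbitrary k a
    rw [swMul_apply_repr _ _ r]
    have : ∀ i ∈ r.index, Δ (r.left i) * (Δ ∘ₗ S') (r.right i)
        = Δ (r.left i * S' (r.right i)) := by
      intro i _
      simp only [LinearMap.comp_apply, hΔ]
      rw [Bialgebra.comul_mul]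
    rw [Finset.sum_congr rfl this, ← map_sum Δ _ r.index,
      HopfAlgebra.sum_mul_antipode_eq_smul r, map_smul]
    have hΔ1 : Δ (1 : H) = (1 : H ⊗[k] H) := map_one (Bialgebra.comulAlgHom k H)
    rw [hΔ1]
    simp only [LinearMap.comp_apply, Algebra.linearMap_apply]
    rw [Algebra.algebraMap_eq_smul_one]
  exact (swMul_unique h1 h2).symm

theorem comul_antipode_repr {g : H} {ι : Type*} (r : Coalgebra.Repr k g ι) :
    Coalgebra.comul (R := k) (antipode (R := k) g)
      = ∑ i ∈ r.index, antipode (R := k) (r.right i) ⊗ₜ[k] antipode (R := k) (r.left i) := by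
  have h := congrArg (fun φ : H →ₗ[k] H ⊗[k] H => φ g) (comul_comp_antipode (k := k) (H := H))
  simp only [LinearMap.comp_apply] at h
  rw [h, ← r.eq, map_sum, map_sum]
  simp [TensorProduct.map_tmul]

end AuxHopf5


section AuxStar

open Coalgebra HopfAlgebra TensorProduct

variable {k : Type*} [CommRing k] [StarRing k]
variable {H : Type*} [Ring H] [HopfAlgebra k H] [StarRing H] [StarModule k H]

theorem comul_star_of_repr
    (hcs : ∀ (g : H) (n : ℕ) (u v : Fin n → H),
      Coalgebra.comul (R := k) g = ∑ i, u i ⊗ₜ[k] v i →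
      Coalgebra.comul (R := k) (star g) = ∑ i, star (u i) ⊗ₜ[k] star (v i))
    {g : H} {ι : Type*} (r : Coalgebra.Repr k g ι) :
    Coalgebra.comul (R := k) (star g)
      = ∑ i ∈ r.index, star (r.left i) ⊗ₜ[k] star (r.right i) := by
  classical
  set n := r.index.card with hn
  set e : r.index ≃ Fin n := r.index.equivFin with he
  have h1 : Coalgebra.comul (R := k) g
      = ∑ j : Fin n, r.left (e.symm j) ⊗ₜ[k] r.right (e.symm j) := by
    rw [← r.eq, ← Finset.sum_coe_sort r.index (fun i => r.left i ⊗ₜ[k] r.right i)]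
    exact (Equiv.sum_comp e.symm fun x : r.index => r.left x ⊗ₜ[k] r.right x).symm
  have h2 := hcs g n (fun j => r.left (e.symm j)) (fun j => r.right (e.symm j)) h1
  rw [h2, ← Finset.sum_coe_sort r.index (fun i => star (r.left i) ⊗ₜ[k] star (r.right i))]
  exact Equiv.sum_comp e.symm fun x : r.index => star (r.left x) ⊗ₜ[k] star (r.right x)

/-- Representation of `comul (star g)` from one of `comul g`. -/
def starRepr
    (hcs : ∀ (g : H) (n : ℕ) (u v : Fin n → H),
      Coalgebra.comul (R := k) g = ∑ i, u i ⊗ₜ[k] v i →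
      Coalgebra.comul (R := k) (star g) = ∑ i, star (u i) ⊗ₜ[k] star (v i))
    {g : H} {ι : Type*} (r : Coalgebra.Repr k g ι) : Coalgebra.Repr k (star g) ι where
  index := r.index
  left := fun i => star (r.left i)
  right := fun i => star (r.right i)
  eq := (comul_star_of_repr hcs r).symm

theorem antipode_star_antipode_star
    (hcs : ∀ (g : H) (n : ℕ) (u v : Fin n → H),
      Coalgebra.comul (R := k) g = ∑ i, u i ⊗ₜ[k] v i →
      Coalgebra.comul (R := k) (star g) = ∑ i, star (u i) ⊗ₜ[k] star (v i))
    (hce : ∀ g : H, Coalgebra.counit (R := k) (star g) = star (Coalgebra.counit (R := k) g))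
    (w : H) : antipode (R := k) (star (antipode (R := k) (star w))) = w := by
  classical
  set S' : H →ₗ[k] H := antipode (R := k) (A := H) with hS'
  set STS : H →ₗ[k] H :=
    { toFun := fun w => S' (star (S' (star w)))
      map_add' := by intros; simp [star_add]
      map_smul' := by intros; simp [star_smul, map_smul] } with hSTS
  have key : swMul k STS S' = (Algebra.linearMap k H) ∘ₗ (counit : H →ₗ[k] k) := by
    ext a
    obtain r := Coalgebra.Repr.arbitrary k a
    rw [swMul_apply_repr _ _ r]
    have hterm : ∀ i ∈ r.index, STS (r.left i) * S' (r.right i)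
        = S' (r.right i * star (S' (star (r.left i)))) := by
      intro i _
      rw [hSTS]
      simp only [LinearMap.coe_mk, AddHom.coe_mk]
      exact (antipode_mul' (r.right i) (star (S' (star (r.left i))))).symm
    rw [Finset.sum_congr rfl hterm, ← map_sum S' _ r.index]
    have claim : ∑ i ∈ r.index, r.right i * star (S' (star (r.left i)))
        = Coalgebra.counit (R := k) a • 1 := by
      have hs := HopfAlgebra.sum_antipode_mul_eq_smul (starRepr hcs r)
      have hstar := congrArg star hs
      rw [star_sum] at hstar
      calc ∑ i ∈ r.index, r.right i * star (S' (star (r.left i)))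
          = ∑ i ∈ (starRepr hcs r).index,
              star (antipode (R := k) ((starRepr hcs r).left i) * (starRepr hcs r).right i) := by
            refine Finset.sum_congr rfl fun i _ => ?_
            show _ = star (antipode (R := k) (star (r.left i)) * star (r.right i))
            simp [star_mul, star_star, hS']
        _ = star (Coalgebra.counit (R := k) (star a) • (1 : H)) := hstar
        _ = Coalgebra.counit (R := k) a • 1 := by
            rw [star_smul, star_one, hce, star_star]
    rw [claim, map_smul]
    have h1 : S' (1 : H) = 1 := antipode_one'
    rw [h1]
    simp only [LinearMap.comp_apply, Algebra.linearMap_apply]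
    rw [Algebra.algebraMap_eq_smul_one]
  have hid : STS = LinearMap.id := swMul_unique key (swMul_antipode_id (k := k) (H := H))
  have := congrArg (fun φ : H →ₗ[k] H => φ w) hid
  simpa [hSTS] using this

theorem antipode_star_antipode
    (hcs : ∀ (g : H) (n : ℕ) (u v : Fin n → H),
      Coalgebra.comul (R := k) g = ∑ i, u i ⊗ₜ[k] v i →
      Coalgebra.comul (R := k) (star g) = ∑ i, star (u i) ⊗ₜ[k] star (v i))
    (hce : ∀ g : H, Coalgebra.counit (R := k) (star g) = star (Coalgebra.counit (R := k) g))
    (p : H) : antipode (R := k) (star (antipode (R := k) p)) = star p := by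
  have h := antipode_star_antipode_star hcs hce (star p)
  rwa [star_star] at h

end AuxStar


/-- In the `*`-setting, the lifted `H`-action
`h ▷ x = J^B(h₍₁₎) · x · J^A(S(h₍₂₎))` on a `(B,A)`-bimodule `E` with an `A`-valued inner
product `⟨·,·⟩` is compatible with the inner product:
`h ▷_A ⟨x,y⟩ = ⟨S(h₍₁₎)* ▷ x, h₍₂₎ ▷ y⟩` (stated for every Sweedler decomposition of
`Δ h`). -/
theorem momLift_compatible_with_inner_product
    (k : Type*) [CommRing k] [StarRing k]
    {H : Type*} [Ring H] [HopfAlgebra k H] [StarRing H] [StarModule k H]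
    {A : Type*} [Ring A] [Algebra k A] [StarRing A] [StarModule k A]
    {B : Type*} [Ring B] [Algebra k B] [StarRing B] [StarModule k B]
    {E : Type*} [AddCommGroup E] [Module k E]
    (hcounit_star : ∀ g : H,
      Coalgebra.counit (R := k) (star g) = star (Coalgebra.counit (R := k) g))
    (hcomul_star : ∀ (g : H) (n : ℕ) (u v : Fin n → H),
      Coalgebra.comul (R := k) g = ∑ i, u i ⊗ₜ[k] v i →
      Coalgebra.comul (R := k) (star g) = ∑ i, star (u i) ⊗ₜ[k] star (v i))
    (actA : H →ₗ[k] A →ₗ[k] A) (hactA : IsModuleAlgebraAction k actA)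
    (hstar_actA : ∀ (h : H) (a : A),
      star (actA h a) = actA (star (HopfAlgebra.antipode (R := k) h)) (star a))
    (actB : H →ₗ[k] B →ₗ[k] B) (hactB : IsModuleAlgebraAction k actB)
    (hstar_actB : ∀ (h : H) (b : B),
      star (actB h b) = actB (star (HopfAlgebra.antipode (R := k) h)) (star b))
    (JA : H →ₗ[k] A) (hJA : IsMomentumMap k actA JA)
    (hJAstar : ∀ g : H, JA (star g) = star (JA g))
    (JB : H →ₗ[k] B) (hJB : IsMomentumMap k actB JB)
    (hJBstar : ∀ g : H, JB (star g) = star (JB g))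
    (lB : B →ₗ[k] E →ₗ[k] E) (rA : A →ₗ[k] E →ₗ[k] E) (hbim : IsBimodule k lB rA)
    (ip : E → E → A)
    (hip_addl : ∀ x x' y : E, ip (x + x') y = ip x y + ip x' y)
    (hip_addr : ∀ x y y' : E, ip x (y + y') = ip x y + ip x y')
    (hip_rsmulr : ∀ (x y : E) (a : A), ip x (rA a y) = ip x y * a)
    (hip_rsmull : ∀ (x y : E) (a : A), ip (rA a x) y = star a * ip x y)
    (hip_star : ∀ x y : E, star (ip x y) = ip y x)
    (hip_nondeg : ∀ x : E, (∀ y : E, ip x y = 0) → x = 0)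
    (hip_lsmul : ∀ (b : B) (x y : E), ip (lB b x) y = ip x (lB (star b) y)) :
    ∀ (h : H) (x y : E) (n : ℕ) (u v : Fin n → H),
      Coalgebra.comul (R := k) h = ∑ i, u i ⊗ₜ[k] v i →
      actA h (ip x y)
        = ∑ i, ip (momLift k JB JA lB rA x (star (HopfAlgebra.antipode (R := k) (u i))))
            (momLift k JB JA lB rA y (v i)) := by
  intro h x y n u v hcomul
  classical
  -- a representation of `comul h`
  set r : Coalgebra.Repr k h (Fin n) :=
    ⟨(Finset.univ : Finset (Fin n)), u, v, hcomul.symm⟩ with hr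
  have ru : (i : r.ι) → Coalgebra.Repr k (r.left i) (H × H) := fun i => Coalgebra.Repr.arbitrary k _
  have rv : (i : r.ι) → Coalgebra.Repr k (r.right i) (H × H) := fun i => Coalgebra.Repr.arbitrary k _
  -- `ip x ·` as a linear map
  have ip_smul : ∀ (c : k) (Y : E), ip x (c • Y) = c • ip x Y := by
    intro c Y
    have h1 : (c • Y) = rA (c • (1 : A)) Y := by
      rw [map_smul, LinearMap.smul_apply, hbim.one_rsmul]
    rw [h1, hip_rsmulr, Algebra.mul_smul_comm, mul_one]
  set ipx : E →ₗ[k] A :=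
    { toFun := ip x
      map_add' := fun a b => hip_addr x a b
      map_smul' := fun c Y => ip_smul c Y } with hipx
  -- the trilinear map
  set ψ : H →ₗ[k] H →ₗ[k] H →ₗ[k] A := LinearMap.mk₂ k
      (fun a m => (LinearMap.mul k A (JA a)) ∘ₗ ipx ∘ₗ (lB (JB m)) ∘ₗ (rA.flip y)
        ∘ₗ JA ∘ₗ HopfAlgebra.antipode (R := k))
      (by intro a a' m; ext c; simp [map_add, add_mul])
      (by intro t a m; ext c; simp [map_smul, smul_mul_assoc])
      (by intro a m m'; ext c; simp [map_add, LinearMap.add_apply, mul_add])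
      (by intro t a m; ext c; simp [map_smul, LinearMap.smul_apply, mul_smul_comm])
      with hψ
  have hψ_apply : ∀ a m c : H, ψ a m c
      = JA a * ip x (lB (JB m) (rA (JA (HopfAlgebra.antipode (R := k) c)) y)) := by
    intro a m c
    simp [hψ, hipx]
  -- expansion of momLift
  have expand_momLift : ∀ (z : E) (g : H) (ρ : Coalgebra.Repr k g (H × H)),
      momLift k JB JA lB rA z g
        = ∑ i ∈ ρ.index,
            lB (JB (ρ.left i)) (rA (JA (HopfAlgebra.antipode (R := k) (ρ.right i))) z) := by
    intro z g ρ
    rw [momLift, sw_apply_repr _ _ _ ρ]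
    simp [LinearMap.comp_apply, LinearMap.flip_apply]
  -- additive structure of ip
  set F : E →+ E →+ A :=
    AddMonoidHom.mk' (fun x' => AddMonoidHom.mk' (ip x') (hip_addr x'))
      (by
        intro a b
        ext z
        exact hip_addl a b z) with hF
  have hF_apply : ∀ x' y' : E, F x' y' = ip x' y' := fun _ _ => rfl
  -- right-hand side computation
  have hRHS : ∀ i : Fin n,
      ip (momLift k JB JA lB rA x (star (HopfAlgebra.antipode (R := k) (u i))))
          (momLift k JB JA lB rA y (v i))
      = ∑ p ∈ (ru i).index, ∑ q ∈ (rv i).index,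
          ψ ((ru i).left p)
            (HopfAlgebra.antipode (R := k) ((ru i).right p) * (rv i).left q)
            ((rv i).right q) := by
    intro i
    set sr : Coalgebra.Repr k (HopfAlgebra.antipode (R := k) (u i)) (H × H) :=
      ⟨(ru i).index, fun p => HopfAlgebra.antipode (R := k) ((ru i).right p),
        fun p => HopfAlgebra.antipode (R := k) ((ru i).left p),
        (comul_antipode_repr (ru i)).symm⟩ with hsr
    set ssr : Coalgebra.Repr k (star (HopfAlgebra.antipode (R := k) (u i))) (H × H) :=
      starRepr hcomul_star sr with hssr
    rw [expand_momLift x _ ssr, expand_momLift y _ (rv i)]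
    rw [← hF_apply]
    rw [map_sum (F _) _ (rv i).index]
    have hswap : ∀ q ∈ (rv i).index,
        F (∑ p ∈ ssr.index,
            lB (JB (ssr.left p)) (rA (JA (HopfAlgebra.antipode (R := k) (ssr.right p))) x))
          (lB (JB ((rv i).left q)) (rA (JA (HopfAlgebra.antipode (R := k) ((rv i).right q))) y))
        = ∑ p ∈ ssr.index,
            F (lB (JB (ssr.left p)) (rA (JA (HopfAlgebra.antipode (R := k) (ssr.right p))) x))
              (lB (JB ((rv i).left q))
                (rA (JA (HopfAlgebra.antipode (R := k) ((rv i).right q))) y)) := by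
      intro q _
      rw [map_sum F _ ssr.index]
      exact AddMonoidHom.finset_sum_apply _ _ _
    rw [Finset.sum_congr rfl hswap, Finset.sum_comm]
    refine Finset.sum_congr rfl fun p _ => ?_
    refine Finset.sum_congr rfl fun q _ => ?_
    rw [hF_apply]
    -- simplify the entries
    have e1 : JB (ssr.left p) = star (JB (HopfAlgebra.antipode (R := k) ((ru i).right p))) := by
      show JB (star (sr.left p)) = _
      rw [hJBstar]
    have e2 : JA (HopfAlgebra.antipode (R := k) (ssr.right p)) = star (JA ((ru i).left p)) := by
      show JA (HopfAlgebra.antipode (R := k) (star (sr.right p))) = _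
      rw [show sr.right p = HopfAlgebra.antipode (R := k) ((ru i).left p) from rfl]
      rw [antipode_star_antipode hcomul_star hcounit_star]
      rw [hJAstar]
    rw [e1, e2]
    rw [hip_lsmul, star_star]
    rw [show lB (JB (HopfAlgebra.antipode (R := k) ((ru i).right p)))
          (lB (JB ((rv i).left q)) (rA (JA (HopfAlgebra.antipode (R := k) ((rv i).right q))) y))
        = lB (JB (HopfAlgebra.antipode (R := k) ((ru i).right p) * (rv i).left q))
            (rA (JA (HopfAlgebra.antipode (R := k) ((rv i).right q))) y) from by
      rw [hJB.map_mul', hbim.mul_lsmul]]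
    rw [hip_rsmull, star_star, hψ_apply]
  -- put everything together
  calc actA h (ip x y)
      = ∑ i ∈ r.index, JA (r.left i) *
          (ip x y * JA (HopfAlgebra.antipode (R := k) (r.right i))) := by
        rw [hJA.inner' h (ip x y), swMul_apply_repr _ _ r]
        refine Finset.sum_congr rfl fun i _ => ?_
        simp [LinearMap.comp_apply]
    _ = ∑ i ∈ r.index, ψ (r.left i) 1 (r.right i) := by
        refine Finset.sum_congr rfl fun i _ => ?_
        rw [hψ_apply, hJB.map_one', hbim.one_lsmul, hip_rsmulr]
    _ = ∑ i ∈ r.index, ∑ p ∈ (ru i).index, ∑ q ∈ (rv i).index,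
          ψ ((ru i).left p)
            (HopfAlgebra.antipode (R := k) ((ru i).right p) * (rv i).left q)
            ((rv i).right q) := (collapse4 ψ r ru rv).symm
    _ = ∑ i, ip (momLift k JB JA lB rA x (star (HopfAlgebra.antipode (R := k) (u i))))
            (momLift k JB JA lB rA y (v i)) := by
        refine Finset.sum_congr rfl fun i _ => ?_
        rw [hRHS i]


end EquivariantMorita
end
end
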